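/- The number of elements of F_1 ∪ F_2 ∪ {0} lying in the interval [0, 2g−1] is exactly g = q_0(q−1). -/

import Mathlib

/-- `q₀ = 2^s`. -/
def q0 (s : ℕ) : ℕ := 2 ^ s

/-- `q = 2 q₀²`. -/
def qS (s : ℕ) : ℕ := 2 * q0 s ^ 2

/-- `m_{j,k,ℓ} = ⌈(q₀/(q₀−1))·(j + k + ℓ − (k+ℓ)/q)⌉`. -/
def mval (s j k l : ℕ) : ℤ :=
  ⌈((q0 s : ℚ) / ((q0 s : ℚ) - 1)) *
    ((j : ℚ) + (k : ℚ) + (l : ℚ) - ((k : ℚ) + (l : ℚ)) / (qS s : ℚ))⌉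

/-- `F₁ = { hq − (ℓ+2k)q₀ − j : ℓ ∈ {0,1}, k,j ∈ {0,…,q₀−1},
    h ∈ {max{1, m_{j,k,ℓ}},…,2q₀} }`. -/
def F1 (s : ℕ) : Set ℕ :=
  {n | ∃ h j k l : ℕ, l ≤ 1 ∧ k < q0 s ∧ j < q0 s ∧
    max 1 (mval s j k l) ≤ (h : ℤ) ∧ h ≤ 2 * q0 s ∧
    n = h * qS s - (l + 2 * k) * q0 s - j}

/-- `F₂ = { hq − (2h−2q₀−1)q₀ − (q₀−1) : h ∈ {q₀+1,…,2q₀} }`. -/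
def F2 (s : ℕ) : Set ℕ :=
  {n | ∃ h : ℕ, q0 s + 1 ≤ h ∧ h ≤ 2 * q0 s ∧
    n = h * qS s - (2 * h - 2 * q0 s - 1) * q0 s - (q0 s - 1)}

/-- `G₁ = { hq − kq₀ − ⌊(2h−k−2)/2⌋ : h ∈ {1,…,q₀}, k ∈ {0,…,2h−2} }`. -/
def G1 (s : ℕ) : Set ℕ :=
  {n | ∃ h k : ℕ, 1 ≤ h ∧ h ≤ q0 s ∧ k ≤ 2 * h - 2 ∧
    n = h * qS s - k * q0 s - (2 * h - k - 2) / 2}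

open Finset

lemma hQ2 (s : ℕ) (hs : 1 ≤ s) : 2 ≤ q0 s := by
  rw [q0]
  calc 2 = 2^1 := rfl
  _ ≤ 2^s := Nat.pow_le_pow_right (by norm_num) hs

lemma qS_eq (s : ℕ) : qS s = 2 * (q0 s * q0 s) := by rw [qS]; ring

lemma cond_e {Q h : ℕ} (hQ : 1 ≤ Q) : (Q - 1) * h + h = Q * h := by
  cases Q with
  | zero => omega
  | succ n => rw [Nat.succ_sub_one, Nat.succ_mul]

lemma cond_iff1 {Q t h : ℕ} (hQ : 1 ≤ Q) (hh1 : 1 ≤ h) (hh2 : h ≤ Q) :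
    Q * t ≤ (Q - 1) * h ↔ t + 1 ≤ h := by
  have e := cond_e (h := h) hQ
  constructor
  · intro H
    by_contra hc
    push_neg at hc
    have h2 : Q * h ≤ Q * t := Nat.mul_le_mul_left _ (by omega)
    linarith
  · intro H
    have h2 : Q * (t+1) ≤ Q * h := Nat.mul_le_mul_left _ H
    have e2 : Q * (t+1) = Q*t + Q := by ring
    linarith

lemma cond_iff2 {Q t h : ℕ} (hQ : 1 ≤ Q) (hh1 : Q + 1 ≤ h) (hh2 : h ≤ 2*Q) :
    Q * t ≤ (Q - 1) * h ↔ t + 2 ≤ h := by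
  have e := cond_e (h := h) hQ
  constructor
  · intro H
    by_contra hc
    push_neg at hc
    have h2 : Q * (h-1) ≤ Q * t := Nat.mul_le_mul_left _ (by omega)
    have e2 : Q * (h-1) + Q = Q * h := by rw [← Nat.mul_succ]; congr 1; omega
    linarith
  · intro H
    have h2 : Q * (t+2) ≤ Q * h := Nat.mul_le_mul_left _ (by omega)
    have e2 : Q * (t+2) = Q * t + 2*Q := by ring
    linarith

lemma step_iff {Q A B u : ℕ} (hu : u < 2*Q) : 2*Q*A ≤ 2*Q*B + u ↔ A ≤ B := by
  constructor
  · intro H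
    by_contra hc
    push_neg at hc
    have h2 : 2*Q*(B+1) ≤ 2*Q*A := Nat.mul_le_mul_left _ hc
    have e : 2*Q*(B+1) = 2*Q*B + 2*Q := by ring
    linarith
  · intro H
    have h2 : 2*Q*A ≤ 2*Q*B := Nat.mul_le_mul_left _ H
    linarith

lemma mval_le_iff (s : ℕ) (hs : 1 ≤ s) (j k l h : ℕ) (hl : l ≤ 1) (hk : k < q0 s) :
    mval s j k l ≤ (h : ℤ) ↔ q0 s * (j + k + l) ≤ (q0 s - 1) * h := by
  have hQ : 2 ≤ q0 s := hQ2 s hs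
  have hQq : (2:ℚ) ≤ (q0 s : ℚ) := by exact_mod_cast hQ
  have hq : (qS s : ℚ) = 2 * (q0 s : ℚ) * (q0 s : ℚ) := by
    have h5 : qS s = 2 * q0 s * q0 s := by rw [qS]; ring
    rw [h5]; push_cast; ring
  have h1 : (0:ℚ) < (q0 s : ℚ) - 1 := by linarith
  have h0 : (0:ℚ) < (q0 s : ℚ) := by linarith
  rw [mval, Int.ceil_le]
  have key : ((q0 s : ℚ) / ((q0 s : ℚ) - 1)) *
      ((j : ℚ) + (k : ℚ) + (l : ℚ) - ((k : ℚ) + (l : ℚ)) / (qS s : ℚ))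
      = (2*(q0 s:ℚ)*((q0 s:ℚ)*((j:ℚ)+(k:ℚ)+(l:ℚ))) - ((k:ℚ)+(l:ℚ)))
        / (2*(q0 s:ℚ)*((q0 s:ℚ)-1)) := by
    rw [hq]
    field_simp
  rw [key, div_le_iff₀ (by positivity), sub_le_iff_le_add]
  have hcast : ((h:ℚ) * (2*(q0 s:ℚ)*((q0 s:ℚ)-1)) + ((k:ℚ)+(l:ℚ)))
      = ((2*q0 s*((q0 s - 1)*h) + (k+l) : ℕ) : ℚ) := by
    push_cast [Nat.cast_sub (show 1 ≤ q0 s by omega)]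
    ring
  have hcast2 : (2*(q0 s:ℚ)*((q0 s:ℚ)*((j:ℚ)+(k:ℚ)+(l:ℚ))))
      = ((2*q0 s*(q0 s *(j+k+l)) : ℕ) : ℚ) := by push_cast; ring
  have hc3 : ((h:ℤ):ℚ) = (h:ℚ) := by push_cast; ring
  rw [hc3, hcast2, hcast, Nat.cast_le]
  exact step_iff (by omega)

def fT (s : ℕ) (p : ℕ × ℕ × ℕ × ℕ) : ℕ :=
  p.1 * qS s - (p.2.2.2 + 2 * p.2.2.1) * q0 s - p.2.1

def MB (s : ℕ) : ℕ := 2 * (q0 s * (qS s - 1)) - 1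

def S1full (s : ℕ) : Finset (ℕ × ℕ × ℕ × ℕ) :=
  (Finset.Icc 1 (2 * q0 s) ×ˢ Finset.range (q0 s) ×ˢ Finset.range (q0 s) ×ˢ
    Finset.range 2).filter
    (fun p => q0 s * (p.2.1 + p.2.2.1 + p.2.2.2) ≤ (q0 s - 1) * p.1)

def S1A (s : ℕ) : Finset (ℕ × ℕ × ℕ × ℕ) := (S1full s).filter (fun p => fT s p ≤ MB s)

def muT (s : ℕ) (h : ℕ) : ℕ := h * qS s - (2 * h - 2 * q0 s - 1) * q0 s - (q0 s - 1)

lemma r_lt (s : ℕ) (hs : 1 ≤ s) {j k l : ℕ} (hl : l ≤ 1) (hk : k < q0 s) (hj : j < q0 s) :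
    (l + 2*k) * q0 s + j < qS s := by
  have hQ := hQ2 s hs
  have h1 : l + 2*k + 1 ≤ 2 * q0 s := by omega
  have h2 : (l + 2*k + 1) * q0 s ≤ 2 * q0 s * q0 s := Nat.mul_le_mul_right _ h1
  have h3 : (l + 2*k + 1) * q0 s = (l + 2*k) * q0 s + q0 s := by ring
  have h4 : qS s = 2 * q0 s * q0 s := by rw [qS]; ring
  linarith

lemma fT_add (s : ℕ) (hs : 1 ≤ s) {h j k l : ℕ} (hl : l ≤ 1) (hk : k < q0 s)
    (hj : j < q0 s) (hh : 1 ≤ h) :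
    fT s (h, j, k, l) + ((l + 2*k) * q0 s + j) = h * qS s := by
  have hr := r_lt s hs hl hk hj
  have hq : qS s * 1 ≤ qS s * h := Nat.mul_le_mul_left _ hh
  have hq2 : qS s * h = h * qS s := by ring
  show h * qS s - (l + 2 * k) * q0 s - j + ((l + 2*k) * q0 s + j) = h * qS s
  omega

lemma digits_eq {Q a b j j' : ℕ} (hj : j < Q) (hj' : j' < Q)
    (h : a * Q + j = b * Q + j') : a = b ∧ j = j' := by
  have key : ∀ a b j j' : ℕ, j < Q → j' < Q → a ≤ b → a*Q + j = b*Q + j' →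
      a = b ∧ j = j' := by
    intro a b j j' hj hj' hab heq
    obtain ⟨d, rfl⟩ := Nat.exists_eq_add_of_le hab
    have e : (a + d) * Q = a*Q + d*Q := by ring
    rcases Nat.eq_zero_or_pos d with rfl | hd
    · have e0 : (a + 0) * Q = a * Q := by ring
      rw [e0] at heq
      exact ⟨by omega, by omega⟩
    · exfalso
      have hQd : Q ≤ d * Q := Nat.le_mul_of_pos_left Q hd
      rw [e, add_assoc] at heq
      have hj2 : j = d * Q + j' := Nat.add_left_cancel heq
      linarith
  rcases le_total a b with hab | hab
  · exact key a b j j' hj hj' hab h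
  · obtain ⟨e1, e2⟩ := key b a j' j hj' hj hab h.symm
    exact ⟨e1.symm, e2.symm⟩

lemma rep_unique (s : ℕ) (hs : 1 ≤ s) {h j k l h' j' k' l' : ℕ}
    (hl : l ≤ 1) (hk : k < q0 s) (hj : j < q0 s) (hh : 1 ≤ h)
    (hl' : l' ≤ 1) (hk' : k' < q0 s) (hj' : j' < q0 s) (hh' : 1 ≤ h')
    (heq : fT s (h, j, k, l) = fT s (h', j', k', l')) :
    h = h' ∧ j = j' ∧ k = k' ∧ l = l' := by
  have e1 := fT_add s hs hl hk hj hh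
  have e2 := fT_add s hs hl' hk' hj' hh'
  have hr1 := r_lt s hs hl hk hj
  have hr2 := r_lt s hs hl' hk' hj'
  rw [heq] at e1
  have hhh : h = h' := by
    rcases lt_trichotomy h h' with hlt | he | hgt
    · exfalso
      have h2 : (h+1) * qS s ≤ h' * qS s := Nat.mul_le_mul_right _ (by omega)
      have e3 : (h+1) * qS s = h * qS s + qS s := by ring
      omega
    · exact he
    · exfalso
      have h2 : (h'+1) * qS s ≤ h * qS s := Nat.mul_le_mul_right _ (by omega)
      have e3 : (h'+1) * qS s = h' * qS s + qS s := by ring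
      omega
  subst hhh
  have hr : (l + 2*k) * q0 s + j = (l' + 2*k') * q0 s + j' := by omega
  obtain ⟨hd, hjj⟩ := digits_eq hj hj' hr
  exact ⟨rfl, hjj, by omega, by omega⟩

lemma mu_as_f (s : ℕ) {h : ℕ} (h1 : q0 s + 1 ≤ h) :
    muT s h = fT s (h, q0 s - 1, h - (q0 s + 1), 1) := by
  have e : (1 + 2*(h - (q0 s + 1))) = 2*h - 2*q0 s - 1 := by omega
  rw [muT, fT]
  dsimp only
  rw [e]

lemma qS_ge (s : ℕ) (hs : 1 ≤ s) : 2*q0 s + 2 ≤ qS s := by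
  have hQ := hQ2 s hs
  have h1 : q0 s * 2 ≤ q0 s * q0 s := Nat.mul_le_mul_left _ hQ
  have h4 : qS s = 2 * (q0 s * q0 s) := qS_eq s
  omega

lemma MB_eq (s : ℕ) (hs : 1 ≤ s) : MB s = 2*(q0 s * qS s) - 2*q0 s - 1 := by
  have h5 := qS_ge s hs
  have e2 : qS s - 1 + 1 = qS s := by omega
  have e : q0 s * (qS s - 1) + q0 s = q0 s * qS s := by
    calc q0 s * (qS s - 1) + q0 s = q0 s * ((qS s - 1) + 1) := by ring
    _ = q0 s * qS s := by rw [e2]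
  rw [MB]
  omega

lemma fT_pos (s : ℕ) (hs : 1 ≤ s) {h j k l : ℕ} (hl : l ≤ 1) (hk : k < q0 s)
    (hj : j < q0 s) (hh : 1 ≤ h) : 1 ≤ fT s (h, j, k, l) := by
  have e := fT_add s hs hl hk hj hh
  have hr := r_lt s hs hl hk hj
  have hq : qS s * 1 ≤ qS s * h := Nat.mul_le_mul_left _ hh
  have hq2 : qS s * h = h * qS s := by ring
  omega

lemma fT_MB_iff (s : ℕ) (hs : 1 ≤ s) {h j k l : ℕ} (hl : l ≤ 1) (hk : k < q0 s)
    (hj : j < q0 s) (hh : 1 ≤ h) (hh2 : h ≤ 2*q0 s) :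
    MB s < fT s (h, j, k, l) ↔ (h = 2*q0 s ∧ (l + 2*k)*q0 s + j ≤ 2*q0 s) := by
  have e := fT_add s hs hl hk hj hh
  have hr := r_lt s hs hl hk hj
  have hMB := MB_eq s hs
  have hq5 := qS_ge s hs
  have hQ := hQ2 s hs
  have e4 : (2*q0 s) * qS s = 2*(q0 s * qS s) := by ring
  have hq6 : qS s * 1 ≤ qS s * q0 s := Nat.mul_le_mul_left _ (by omega)
  have hq7 : qS s * q0 s = q0 s * qS s := by ring
  have hq8 : qS s * h = h * qS s := by ring
  have hq9 : qS s * 1 ≤ qS s * h := Nat.mul_le_mul_left _ hh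
  constructor
  · intro H
    have hhe : h = 2*q0 s := by
      by_contra hc
      have h2 : (h+1) * qS s ≤ (2*q0 s) * qS s := Nat.mul_le_mul_right _ (by omega)
      have e3 : (h+1) * qS s = h * qS s + qS s := by ring
      omega
    subst hhe
    exact ⟨rfl, by omega⟩
  · rintro ⟨rfl, hsmall⟩
    omega

lemma R_small_iff (s : ℕ) (hs : 1 ≤ s) {j k l : ℕ} (hl : l ≤ 1) (hk : k < q0 s)
    (hj : j < q0 s) :
    (l + 2*k)*q0 s + j ≤ 2*q0 s ↔ (k = 0 ∨ (k = 1 ∧ l = 0 ∧ j = 0)) := by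
  have hQ := hQ2 s hs
  have hl01 : l = 0 ∨ l = 1 := by omega
  constructor
  · intro H
    match k with
    | 0 => exact Or.inl rfl
    | 1 =>
      rcases hl01 with rfl | rfl
      · right; refine ⟨rfl, rfl, ?_⟩; omega
      · exfalso; omega
    | (n+2) =>
      exfalso
      have h4 : 4*q0 s ≤ (l + 2*(n+2)) * q0 s := Nat.mul_le_mul_right _ (by omega)
      omega
  · intro H
    rcases H with rfl | ⟨rfl, rfl, rfl⟩
    · rcases hl01 with rfl | rfl <;> omega
    · omega

lemma card_E (s : ℕ) (hs : 1 ≤ s) :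
    ((S1full s).filter (fun p => ¬ fT s p ≤ MB s)).card = 2*q0 s + 1 := by
  have hQ := hQ2 s hs
  have hset : (S1full s).filter (fun p => ¬ fT s p ≤ MB s)
      = ({2*q0 s} : Finset ℕ) ×ˢ Finset.range (q0 s) ×ˢ ({0} : Finset ℕ) ×ˢ Finset.range 2
        ∪ {(2*q0 s, 0, 1, 0)} := by
    ext ⟨h, j, k, l⟩
    simp only [Finset.mem_filter, Finset.mem_union, Finset.mem_product, Finset.mem_singleton,
      Finset.mem_range, Finset.mem_Icc, S1full, Prod.mk.injEq, not_le]
    constructor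
    · rintro ⟨⟨⟨⟨hh1, hh2⟩, hj, hk, hl⟩, hcond⟩, hMB⟩
      obtain ⟨hhe, hsm⟩ := (fT_MB_iff s hs (by omega) hk hj hh1 hh2).mp hMB
      rcases (R_small_iff s hs (by omega) hk hj).mp hsm with rfl | ⟨rfl, rfl, rfl⟩
      · exact Or.inl ⟨hhe, hj, rfl, hl⟩
      · exact Or.inr ⟨hhe, rfl, rfl, rfl⟩
    · rintro (⟨rfl, hj, rfl, hl⟩ | ⟨rfl, rfl, rfl, rfl⟩)
      · refine ⟨⟨⟨⟨by omega, le_refl _⟩, hj, by omega, hl⟩, ?_⟩, ?_⟩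
        · have := (cond_iff2 (t := j + 0 + l) (by omega : 1 ≤ q0 s)
            (by omega : q0 s + 1 ≤ 2*q0 s) (le_refl _)).mpr (by omega)
          exact this
        · exact (fT_MB_iff s hs (by omega) (by omega) hj (by omega) (le_refl _)).mpr
            ⟨rfl, (R_small_iff s hs (by omega) (by omega) hj).mpr (Or.inl rfl)⟩
      · refine ⟨⟨⟨⟨by omega, le_refl _⟩, by omega, by omega, by omega⟩, ?_⟩, ?_⟩
        · have := (cond_iff2 (t := 0 + 1 + 0) (by omega : 1 ≤ q0 s)
            (by omega : q0 s + 1 ≤ 2*q0 s) (le_refl _)).mpr (by omega)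
          exact this
        · exact (fT_MB_iff s hs (by omega) (by omega) (by omega) (by omega) (le_refl _)).mpr
            ⟨rfl, (R_small_iff s hs (by omega) (by omega) (by omega)).mpr
              (Or.inr ⟨rfl, rfl, rfl⟩)⟩
  rw [hset, Finset.card_union_of_disjoint]
  · simp [Finset.card_product]
    omega
  · rw [Finset.disjoint_left]
    rintro ⟨h, j, k, l⟩ hmem hmem2
    simp only [Finset.mem_product, Finset.mem_singleton, Finset.mem_range,
      Prod.mk.injEq] at hmem hmem2
    omega

lemma cnt_le (Q B : ℕ) (hB : B + 1 ≤ Q) :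
    ((Finset.range Q ×ˢ Finset.range Q ×ˢ Finset.range 2).filter
      (fun x => x.1 + x.2.1 + x.2.2 ≤ B)).card = (B+1)^2 := by
  have htarget : ((Finset.range (B+1)) ×ˢ (Finset.range (B+1))).card = (B+1)^2 := by
    rw [Finset.card_product, Finset.card_range]; ring
  rw [← htarget]
  refine Finset.card_bij' (fun x _ => if x.2.2 = 0 then (x.1, x.1 + x.2.1) else (x.2.1 + x.1 + 1, x.1))
    (fun b _ => if b.1 ≤ b.2 then (b.1, b.2 - b.1, 0) else (b.2, b.1 - b.2 - 1, 1)) ?_ ?_ ?_ ?_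
  · rintro ⟨j, k, l⟩ ha
    simp only [Finset.mem_filter, Finset.mem_product, Finset.mem_range] at ha ⊢
    beta_reduce
    split_ifs <;> simp_all <;> omega
  · rintro ⟨a, b⟩ hb
    simp only [Finset.mem_product, Finset.mem_range] at hb
    beta_reduce
    split_ifs <;> simp_all <;> omega
  · rintro ⟨j, k, l⟩ ha
    simp only [Finset.mem_filter, Finset.mem_product, Finset.mem_range] at ha
    beta_reduce
    split_ifs <;> simp_all [Prod.ext_iff] <;> omega
  · rintro ⟨a, b⟩ hb
    simp only [Finset.mem_product, Finset.mem_range] at hb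
    beta_reduce
    split_ifs <;> simp_all [Prod.ext_iff] <;> omega

lemma cnt_ge (Q B : ℕ) (hQ : 1 ≤ Q) (h1 : Q ≤ B + 1) (h2 : B ≤ 2*Q - 2) :
    ((Finset.range Q ×ˢ Finset.range Q ×ˢ Finset.range 2).filter
      (fun x => x.1 + x.2.1 + x.2.2 ≤ B)).card = 2*Q^2 - (2*Q - 1 - B)^2 := by
  have htot : (Finset.range Q ×ˢ Finset.range Q ×ˢ Finset.range 2).card = 2*Q^2 := by
    simp [Finset.card_product]; ring
  have hsplit := Finset.card_filter_add_card_filter_not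
    (s := Finset.range Q ×ˢ Finset.range Q ×ˢ Finset.range 2)
    (p := fun x => x.1 + x.2.1 + x.2.2 ≤ B)
  have hc : ((Finset.range Q ×ˢ Finset.range Q ×ˢ Finset.range 2).filter
      (fun x => x.1 + x.2.1 + x.2.2 ≤ 2*Q - 2 - B)).card = (2*Q - 2 - B + 1)^2 :=
    cnt_le Q _ (by omega)
  have hbij : ((Finset.range Q ×ˢ Finset.range Q ×ˢ Finset.range 2).filter
      (fun x => ¬ (x.1 + x.2.1 + x.2.2 ≤ B))).card
      = ((Finset.range Q ×ˢ Finset.range Q ×ˢ Finset.range 2).filter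
      (fun x => x.1 + x.2.1 + x.2.2 ≤ 2*Q - 2 - B)).card := by
    refine Finset.card_bij' (fun x _ => (Q - 1 - x.1, Q - 1 - x.2.1, 1 - x.2.2))
      (fun x _ => (Q - 1 - x.1, Q - 1 - x.2.1, 1 - x.2.2)) ?_ ?_ ?_ ?_ <;>
    · rintro ⟨j, k, l⟩ ha
      simp only [Finset.mem_filter, Finset.mem_product, Finset.mem_range,
        Prod.mk.injEq] at ha ⊢
      omega
  have hneg : ((Finset.range Q ×ˢ Finset.range Q ×ˢ Finset.range 2).filter
      (fun x => ¬ (x.1 + x.2.1 + x.2.2 ≤ B))).card = (2*Q - 1 - B)^2 := by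
    rw [hbij, hc]; congr 1; omega
  have hle : (2*Q - 1 - B)^2 ≤ 2*Q^2 := by
    have h3 : (2*Q - 1 - B) ≤ Q := by omega
    nlinarith
  omega

lemma card_S1full (s : ℕ) (hs : 1 ≤ s) : (S1full s).card = 2 * q0 s ^ 3 := by
  have hQ := hQ2 s hs
  rw [S1full, Finset.card_filter, Finset.sum_product]
  have inner : ∀ h : ℕ, (∑ x ∈ Finset.range (q0 s) ×ˢ Finset.range (q0 s) ×ˢ Finset.range 2,
      if q0 s * ((h, x).2.1 + (h, x).2.2.1 + (h, x).2.2.2) ≤ (q0 s - 1) * (h, x).1 then 1 else 0)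
      = ((Finset.range (q0 s) ×ˢ Finset.range (q0 s) ×ˢ Finset.range 2).filter
        (fun x => q0 s * (x.1 + x.2.1 + x.2.2) ≤ (q0 s - 1) * h)).card := by
    intro h
    rw [Finset.card_filter]
  rw [Finset.sum_congr rfl (fun h _ => inner h)]
  have hIcc : Finset.Icc 1 (2 * q0 s) = Finset.Ioc 0 (2 * q0 s) := Finset.Icc_add_one_left_eq_Ioc 0 _
  rw [hIcc, ← Finset.sum_Ioc_consecutive _ (show (0:ℕ) ≤ q0 s by omega)
    (show q0 s ≤ 2 * q0 s by omega)]
  have sum1 : ∑ h ∈ Finset.Ioc 0 (q0 s),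
      ((Finset.range (q0 s) ×ˢ Finset.range (q0 s) ×ˢ Finset.range 2).filter
        (fun x => q0 s * (x.1 + x.2.1 + x.2.2) ≤ (q0 s - 1) * h)).card
      = ∑ h ∈ Finset.Ioc 0 (q0 s), h^2 := by
    apply Finset.sum_congr rfl
    intro h hh
    rw [Finset.mem_Ioc] at hh
    have hcong : (Finset.range (q0 s) ×ˢ Finset.range (q0 s) ×ˢ Finset.range 2).filter
        (fun x => q0 s * (x.1 + x.2.1 + x.2.2) ≤ (q0 s - 1) * h)
        = (Finset.range (q0 s) ×ˢ Finset.range (q0 s) ×ˢ Finset.range 2).filter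
        (fun x => x.1 + x.2.1 + x.2.2 ≤ h - 1) := by
      apply Finset.filter_congr
      intro x hx
      rw [cond_iff1 (by omega) (by omega) hh.2]
      constructor <;> intro <;> omega
    rw [hcong, cnt_le (q0 s) (h-1) (by omega), show h - 1 + 1 = h by omega]
  have sum2 : ∑ h ∈ Finset.Ioc (q0 s) (2 * q0 s),
      ((Finset.range (q0 s) ×ˢ Finset.range (q0 s) ×ˢ Finset.range 2).filter
        (fun x => q0 s * (x.1 + x.2.1 + x.2.2) ≤ (q0 s - 1) * h)).card
      = ∑ h ∈ Finset.Ioc 0 (q0 s), (2 * q0 s^2 - h^2) := by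
    have step1 : ∀ h ∈ Finset.Ioc (q0 s) (2 * q0 s),
        ((Finset.range (q0 s) ×ˢ Finset.range (q0 s) ×ˢ Finset.range 2).filter
          (fun x => q0 s * (x.1 + x.2.1 + x.2.2) ≤ (q0 s - 1) * h)).card
        = 2 * q0 s^2 - (2 * q0 s + 1 - h)^2 := by
      intro h hh
      rw [Finset.mem_Ioc] at hh
      have hcong : (Finset.range (q0 s) ×ˢ Finset.range (q0 s) ×ˢ Finset.range 2).filter
          (fun x => q0 s * (x.1 + x.2.1 + x.2.2) ≤ (q0 s - 1) * h)
          = (Finset.range (q0 s) ×ˢ Finset.range (q0 s) ×ˢ Finset.range 2).filter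
          (fun x => x.1 + x.2.1 + x.2.2 ≤ h - 2) := by
        apply Finset.filter_congr
        intro x hx
        rw [cond_iff2 (by omega) (by omega) hh.2]
        constructor <;> intro <;> omega
      rw [hcong, cnt_ge (q0 s) (h-2) (by omega) (by omega) (by omega),
        show 2 * q0 s - 1 - (h - 2) = 2 * q0 s + 1 - h by omega]
    rw [Finset.sum_congr rfl step1]
    apply Finset.sum_nbij' (i := fun h => 2 * q0 s + 1 - h) (j := fun h => 2 * q0 s + 1 - h)
    · intro a ha; rw [Finset.mem_Ioc] at *; omega
    · intro a ha; rw [Finset.mem_Ioc] at *; omega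
    · intro a ha; rw [Finset.mem_Ioc] at ha; omega
    · intro a ha; rw [Finset.mem_Ioc] at ha; omega
    · intro a ha; rfl
  rw [sum1, sum2, ← Finset.sum_add_distrib]
  have sum3 : ∑ h ∈ Finset.Ioc 0 (q0 s), (h^2 + (2 * q0 s^2 - h^2))
      = ∑ h ∈ Finset.Ioc 0 (q0 s), 2 * q0 s^2 := by
    apply Finset.sum_congr rfl
    intro h hh
    rw [Finset.mem_Ioc] at hh
    have h1 : h^2 ≤ q0 s^2 := Nat.pow_le_pow_left hh.2 2
    have h2 : q0 s^2 ≤ 2 * q0 s^2 := by omega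
    omega
  rw [sum3, Finset.sum_const, Nat.card_Ioc, smul_eq_mul]
  have : q0 s - 0 = q0 s := by omega
  rw [this]
  ring

def TT (s : ℕ) : Finset ℕ :=
  insert 0 ((S1A s).image (fT s) ∪ (Finset.Icc (q0 s + 1) (2 * q0 s)).image (muT s))

lemma muT_le_MB (s : ℕ) (hs : 1 ≤ s) {h : ℕ} (h1 : q0 s + 1 ≤ h) (h2 : h ≤ 2*q0 s) :
    muT s h ≤ MB s := by
  have hQ := hQ2 s hs
  rw [mu_as_f s h1]
  by_contra hc
  push_neg at hc
  obtain ⟨hhe, hsm⟩ := (fT_MB_iff s hs (le_refl 1) (by omega) (by omega)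
    (by omega) h2).mp hc
  subst hhe
  have e : (1 + 2*(2*q0 s - (q0 s + 1))) = 2*q0 s - 1 := by omega
  rw [e] at hsm
  have h4 : (2*q0 s - 1) * 2 ≤ (2*q0 s - 1) * q0 s := Nat.mul_le_mul_left _ hQ
  omega

lemma set_eq (s : ℕ) (hs : 1 ≤ s) :
    (F1 s ∪ F2 s ∪ {0}) ∩ Set.Icc 0 (MB s) = ↑(TT s) := by
  have hQ := hQ2 s hs
  ext n
  simp only [Set.mem_inter_iff, Set.mem_union, Set.mem_singleton_iff, Set.mem_Icc,
    TT, Finset.coe_insert, Set.mem_insert_iff, Finset.coe_union,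
    Finset.mem_coe, Finset.mem_image, F1, F2, Set.mem_setOf_eq, zero_le, true_and]
  constructor
  · rintro ⟨hmem, hle⟩
    rcases hmem with (⟨h, j, k, l, hl, hk, hj, hm, hh2, rfl⟩ | ⟨h, hh1, hh2, rfl⟩) | rfl
    · right; left
      rw [max_le_iff] at hm
      have hh1 : 1 ≤ h := by exact_mod_cast hm.1
      have hcond := (mval_le_iff s hs j k l h hl hk).mp hm.2
      refine ⟨(h, j, k, l), ?_, rfl⟩
      simp only [S1A, S1full, Finset.mem_filter, Finset.mem_product, Finset.mem_Icc,
        Finset.mem_range]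
      exact ⟨⟨⟨⟨hh1, hh2⟩, hj, hk, by omega⟩, hcond⟩, hle⟩
    · right; right
      refine ⟨h, ?_, rfl⟩
      rw [Finset.mem_Icc]
      exact ⟨hh1, hh2⟩
    · left; rfl
  · rintro (rfl | ⟨⟨h, j, k, l⟩, hp, rfl⟩ | ⟨h, hh, rfl⟩)
    · exact ⟨Or.inr rfl, Nat.zero_le _⟩
    · simp only [S1A, S1full, Finset.mem_filter, Finset.mem_product, Finset.mem_Icc,
        Finset.mem_range] at hp
      obtain ⟨⟨⟨⟨hh1, hh2⟩, hj, hk, hl⟩, hcond⟩, hle⟩ := hp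
      refine ⟨Or.inl (Or.inl ⟨h, j, k, l, by omega, hk, hj, ?_, hh2, rfl⟩), hle⟩
      rw [max_le_iff]
      exact ⟨by exact_mod_cast hh1, (mval_le_iff s hs j k l h (by omega) hk).mpr hcond⟩
    · rw [Finset.mem_Icc] at hh
      exact ⟨Or.inl (Or.inr ⟨h, hh.1, hh.2, rfl⟩), muT_le_MB s hs hh.1 hh.2⟩

/-- `|(F₁ ∪ F₂ ∪ {0}) ∩ [0, 2g−1]| = g = q₀(q−1)`. -/
theorem stmt7 (s : ℕ) (hs : 1 ≤ s) :
    ((F1 s ∪ F2 s ∪ {0}) ∩ Set.Icc 0 (2 * (q0 s * (qS s - 1)) - 1)).ncard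
      = q0 s * (qS s - 1) := by
  have hQ := hQ2 s hs
  have hse := set_eq s hs
  show ((F1 s ∪ F2 s ∪ {0}) ∩ Set.Icc 0 (MB s)).ncard = q0 s * (qS s - 1)
  rw [hse, Set.ncard_coe_finset, TT]
  have h0 : (0:ℕ) ∉ (S1A s).image (fT s) ∪ (Finset.Icc (q0 s + 1) (2*q0 s)).image (muT s) := by
    intro hc
    rcases Finset.mem_union.mp hc with hc | hc
    · obtain ⟨⟨h, j, k, l⟩, hp, he⟩ := Finset.mem_image.mp hc
      simp only [S1A, S1full, Finset.mem_filter, Finset.mem_product, Finset.mem_Icc,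
        Finset.mem_range] at hp
      obtain ⟨⟨⟨⟨hh1, hh2⟩, hj, hk, hl⟩, hcond⟩, hle⟩ := hp
      have := fT_pos s hs (show l ≤ 1 by omega) hk hj hh1
      omega
    · obtain ⟨h, hh, he⟩ := Finset.mem_image.mp hc
      rw [Finset.mem_Icc] at hh
      rw [mu_as_f s hh.1] at he
      have := fT_pos s hs (le_refl 1) (show h - (q0 s + 1) < q0 s by omega)
        (show q0 s - 1 < q0 s by omega) (show 1 ≤ h by omega)
      omega
  have hdisj : Disjoint ((S1A s).image (fT s))
      ((Finset.Icc (q0 s + 1) (2*q0 s)).image (muT s)) := by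
    rw [Finset.disjoint_left]
    intro a ha hb
    obtain ⟨⟨h, j, k, l⟩, hp, rfl⟩ := Finset.mem_image.mp ha
    obtain ⟨h', hh', heq⟩ := Finset.mem_image.mp hb
    rw [Finset.mem_Icc] at hh'
    simp only [S1A, S1full, Finset.mem_filter, Finset.mem_product, Finset.mem_Icc,
      Finset.mem_range] at hp
    obtain ⟨⟨⟨⟨hh1, hh2⟩, hj, hk, hl⟩, hcond⟩, hle⟩ := hp
    rw [mu_as_f s hh'.1] at heq
    obtain ⟨e1, e2, e3, e4⟩ := rep_unique s hs (le_refl 1)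
      (show h' - (q0 s + 1) < q0 s by omega) (show q0 s - 1 < q0 s by omega)
      (show 1 ≤ h' by omega) (show l ≤ 1 by omega) hk hj hh1 heq
    have hcond' : q0 s * (j + k + l) ≤ (q0 s - 1) * h' := by rw [e1]; exact hcond
    have hsum : j + k + l = h' - 1 := by omega
    rw [hsum] at hcond'
    have := (cond_iff2 (show 1 ≤ q0 s by omega) hh'.1 (show h' ≤ 2 * q0 s by omega)).mp hcond'
    omega
  rw [Finset.card_insert_of_notMem h0, Finset.card_union_of_disjoint hdisj]
  have hinj1 : ((S1A s).image (fT s)).card = (S1A s).card := by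
    apply Finset.card_image_of_injOn
    rintro ⟨h, j, k, l⟩ hp ⟨h', j', k', l'⟩ hp' heq
    simp only [S1A, S1full, Finset.coe_filter, Finset.mem_product, Finset.mem_Icc,
      Finset.mem_range, Set.mem_setOf_eq, Finset.mem_filter] at hp hp'
    obtain ⟨⟨⟨⟨hh1, hh2⟩, hj, hk, hl⟩, hcond⟩, hle⟩ := hp
    obtain ⟨⟨⟨⟨hh1', hh2'⟩, hj', hk', hl'⟩, hcond'⟩, hle'⟩ := hp'
    obtain ⟨e1, e2, e3, e4⟩ := rep_unique s hs (show l ≤ 1 by omega) hk hj hh1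
      (show l' ≤ 1 by omega) hk' hj' hh1' heq
    simp [Prod.ext_iff]
    omega
  have hinj2 : ((Finset.Icc (q0 s + 1) (2*q0 s)).image (muT s)).card
      = (Finset.Icc (q0 s + 1) (2*q0 s)).card := by
    apply Finset.card_image_of_injOn
    intro h hh h' hh' heq
    simp only [Finset.coe_Icc, Set.mem_Icc] at hh hh'
    rw [mu_as_f s hh.1, mu_as_f s hh'.1] at heq
    obtain ⟨e1, -, -, -⟩ := rep_unique s hs (le_refl 1)
      (show h - (q0 s + 1) < q0 s by omega) (show q0 s - 1 < q0 s by omega)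
      (show 1 ≤ h by omega) (le_refl 1)
      (show h' - (q0 s + 1) < q0 s by omega) (show q0 s - 1 < q0 s by omega)
      (show 1 ≤ h' by omega) heq
    exact e1
  rw [hinj1, hinj2, Nat.card_Icc]
  have hA : (S1A s).card + ((S1full s).filter (fun p => ¬ fT s p ≤ MB s)).card
      = (S1full s).card := by
    rw [S1A]
    exact Finset.card_filter_add_card_filter_not _
  rw [card_E s hs, card_S1full s hs] at hA
  have e5 : q0 s * qS s = 2 * q0 s ^ 3 := by rw [qS]; ring
  have h5 := qS_ge s hs
  have e2 : qS s - 1 + 1 = qS s := by omega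
  have eR : q0 s * (qS s - 1) + q0 s = q0 s * qS s := by
    calc q0 s * (qS s - 1) + q0 s = q0 s * ((qS s - 1) + 1) := by ring
    _ = q0 s * qS s := by rw [e2]
  omega
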